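/- (Proposition 2(ii)) Let k be odd, let X₁, …, X_k ∈ 𝔽₂ⁿ (no independence assumed), and let f : 𝔽₂ⁿ → 𝔽₂ satisfy the majority promise: for every q ∈ 𝔽₂ⁿ, 2·#{i ∈ {1,…,k} : f(q) = q·Xᵢ} ≥ k. Then Σᵢ₌₁ᵏ C_{Xᵢ}(f)² ≥ N²/k, where N = 2ⁿ. -/
import Mathlib


/-- The inner product of two vectors in `𝔽₂ⁿ`. -/
def dotp {n : ℕ} (q X : Fin n → ZMod 2) : ZMod 2 := ∑ i, q i * X i

/-- The Deutsch–Jozsa coefficient `C_j(f) = #{q : j·q = f q} − #{q : j·q ≠ f q}`. -/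
def coefC {n : ℕ} (f : (Fin n → ZMod 2) → ZMod 2) (j : Fin n → ZMod 2) : ℤ :=
  ((Finset.univ.filter (fun q : Fin n → ZMod 2 => dotp j q = f q)).card : ℤ) -
  ((Finset.univ.filter (fun q : Fin n → ZMod 2 => dotp j q ≠ f q)).card : ℤ)

lemma dotp_comm {n : ℕ} (a b : Fin n → ZMod 2) : dotp a b = dotp b a := by
  unfold dotp; exact Finset.sum_congr rfl fun i _ => mul_comm _ _

lemma coefC_eq {n : ℕ} (f : (Fin n → ZMod 2) → ZMod 2) (j : Fin n → ZMod 2) :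
    coefC f j = ∑ q : Fin n → ZMod 2, (if dotp j q = f q then (1 : ℤ) else -1) := by
  rw [coefC, Finset.sum_ite, Finset.sum_const, Finset.sum_const]
  simp [Finset.filter_not, sub_eq_add_neg]

/-- **Proposition 2(ii).** For odd `k`, any `X₁, …, X_k ∈ 𝔽₂ⁿ` (no independence
assumed), and `f` agreeing with the majority of the `q·Xᵢ` for every `q`, one has
`Σᵢ C_{Xᵢ}(f)² ≥ N²/k` with `N = 2ⁿ`. -/
theorem prop2_ii {n k : ℕ} (hk : Odd k) (X : Fin k → (Fin n → ZMod 2))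
    (f : (Fin n → ZMod 2) → ZMod 2)
    (hf : ∀ q, k ≤ 2 * (Finset.univ.filter (fun i : Fin k => f q = dotp q (X i))).card) :
    ∑ i, (coefC f (X i) : ℚ) ^ 2 ≥ ((2 ^ n : ℚ)) ^ 2 / k := by
  have hkpos : 0 < k := hk.pos
  -- Step 1: Σᵢ C_{Xᵢ} ≥ 2^n  (in ℤ)
  have hsum : (2 ^ n : ℤ) ≤ ∑ i, coefC f (X i) := by
    have : ∑ i, coefC f (X i)
        = ∑ q : Fin n → ZMod 2, ∑ i, (if dotp (X i) q = f q then (1 : ℤ) else -1) := by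
      simp_rw [coefC_eq]; rw [Finset.sum_comm]
    rw [this]
    have card_eq : Fintype.card (Fin n → ZMod 2) = 2 ^ n := by simp
    calc (2 ^ n : ℤ) = ∑ _q : Fin n → ZMod 2, (1 : ℤ) := by simp [card_eq]
      _ ≤ _ := by
        apply Finset.sum_le_sum
        intro q _
        -- inner sum = 2*A - k ≥ 1
        set A := (Finset.univ.filter (fun i : Fin k => f q = dotp q (X i))).card with hA
        have hiff : ∀ i : Fin k, (dotp (X i) q = f q) ↔ (f q = dotp q (X i)) := by
          intro i; rw [dotp_comm]; exact eq_comm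
        have hsum2 : ∑ i, (if dotp (X i) q = f q then (1 : ℤ) else -1)
            = 2 * (A : ℤ) - k := by
          rw [Finset.sum_ite, Finset.sum_const, Finset.sum_const]
          have : Finset.univ.filter (fun i : Fin k => dotp (X i) q = f q)
              = Finset.univ.filter (fun i : Fin k => f q = dotp q (X i)) := by
            apply Finset.filter_congr; intro i _; simp [hiff i]
          rw [this, Finset.filter_not, Finset.card_univ_diff]
          simp only [Fintype.card_fin, smul_eq_mul, mul_one, mul_neg]
          have hAle : A ≤ k := by
            rw [hA]; exact (Finset.card_filter_le _ _).trans (by simp)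
          rw [this, ← hA]
          simp only [nsmul_eq_mul, mul_one, mul_neg_one]
          omega
        rw [hsum2]
        have h1 : k ≤ 2 * A := hf q
        have h2 : 2 * A ≠ k := by
          intro h; exact (Nat.not_even_iff_odd.mpr hk) ⟨A, by omega⟩
        have : k + 1 ≤ 2 * A := by omega
        have : (k : ℤ) + 1 ≤ 2 * A := by exact_mod_cast this
        linarith
  -- Step 2: Cauchy–Schwarz
  have hcs : (∑ i, (coefC f (X i) : ℚ)) ^ 2 ≤ k * ∑ i, (coefC f (X i) : ℚ) ^ 2 := by
    have := sq_sum_le_card_mul_sum_sq (s := (Finset.univ : Finset (Fin k)))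
      (f := fun i => (coefC f (X i) : ℚ))
    simpa using this
  have hsumQ : (2 ^ n : ℚ) ≤ ∑ i, (coefC f (X i) : ℚ) := by exact_mod_cast hsum
  have hn : (0 : ℚ) ≤ (2 ^ n : ℚ) := by positivity
  have hsq : ((2 ^ n : ℚ)) ^ 2 ≤ (∑ i, (coefC f (X i) : ℚ)) ^ 2 :=
    pow_le_pow_left₀ hn hsumQ 2
  have hkQ : (0 : ℚ) < k := by exact_mod_cast hkpos
  rw [ge_iff_le, div_le_iff₀ hkQ]
  calc ((2 ^ n : ℚ)) ^ 2 ≤ (∑ i, (coefC f (X i) : ℚ)) ^ 2 := hsq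
    _ ≤ k * ∑ i, (coefC f (X i) : ℚ) ^ 2 := hcs
    _ = (∑ i, (coefC f (X i) : ℚ) ^ 2) * k := mul_comm _ _
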